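/- Soundness of the sum-check protocol (abstract round-by-round form): Let F be a finite field of size p, let P : Fⁿ → F be given, and define for each partial assignment (a₁,...,a_{i-1}) the true polynomial Q*_i(x) = Σ_{x_{i+1},...,xₙ ∈ {0,1}} P(a₁,...,a_{i-1}, x, x_{i+1},...,xₙ). Suppose each Q*_i is a univariate polynomial of degree at most d. If Σ_{x ∈ {0,1}ⁿ} P(x) ≠ v for the claimed value v, then for any (possibly adversarial) Prover strategy sending degree-≤d polynomials Q₁,...,Qₙ, the probability over uniformly random a₁,...,aₙ ∈ F that all Verifier checks pass (Q₁(0)+Q₁(1) = v, Q_i(0)+Q_i(1) = Q_{i-1}(a_{i-1}) for 1 < i ≤ n, and Qₙ(aₙ) = P(a₁,...,aₙ)) is at most n·d/p. -/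

import Mathlib

open Polynomial Finset

/-- Splitting equivalence at the coordinate `i` itself. -/
def sumcheckEquivSplit {n : ℕ} (i : Fin n) :
    ({j : Fin n // (i : ℕ) ≤ (j : ℕ)} → Bool) ≃ Bool × ({j : Fin n // i < j} → Bool) where
  toFun s := (s ⟨i, le_rfl⟩, fun j => s ⟨j.1, le_of_lt j.2⟩)
  invFun bt j := if h : i < j.1 then bt.2 ⟨j.1, h⟩ else bt.1
  left_inv s := by
    funext j
    dsimp only
    by_cases h : i < j.1
    · rw [dif_pos h]
    · rw [dif_neg h]
      have hji : j = ⟨i, le_rfl⟩ := by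
        apply Subtype.ext; apply Fin.ext
        show ((j.1 : Fin n) : ℕ) = (i : ℕ)
        have hj := j.2
        simp only [Fin.lt_def, not_lt] at h
        omega
      rw [hji]
  right_inv bt := by
    ext j
    · dsimp only
      rw [dif_neg (lt_irrefl i)]
    · dsimp only
      rw [dif_pos j.2]

/-- The honest partial sum `R_i(a) = Σ_{s on coords ≥ i} P(a with bool tail)`. -/
noncomputable def sumcheckR {F : Type} [Field F] [Fintype F] {n : ℕ}
    (P : (Fin n → F) → F) (i : ℕ) (a : Fin n → F) : F :=
  ∑ s : ({j : Fin n // i ≤ (j : ℕ)} → Bool),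
    P (fun j => if h : i ≤ (j : ℕ) then (if s ⟨j, h⟩ then 1 else 0) else a j)


set_option maxHeartbeats 2000000 in
/-- Soundness of the sum-check protocol, abstract round-by-round form.

`P : Fⁿ → F` is given, and `Qstar i a` is the honest round-`i` polynomial
`Q*_i(x) = Σ_{x_{i+1},…,xₙ ∈ {0,1}} P(a₁,…,a_{i-1},x,x_{i+1},…,xₙ)`, assumed to have
degree at most `d`.  If the claimed value `v` is wrong, then for any prover strategy
`Q` sending degree-`≤ d` polynomials, the probability over uniform `a ∈ Fⁿ` that all
verifier checks pass is at most `n·d/p`. -/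
theorem sumcheck_soundness {F : Type} [Field F] [Fintype F]
    (n d : ℕ) (hn : 0 < n)
    (P : (Fin n → F) → F) (v : F)
    (Qstar Q : Fin n → (Fin n → F) → Polynomial F)
    (hQstar_eval : ∀ (i : Fin n) (a : Fin n → F) (x : F),
      (Qstar i a).eval x =
        ∑ s : ({j : Fin n // i < j} → Bool),
          P (fun j => if h : i < j then (if s ⟨j, h⟩ then 1 else 0)
                      else if j = i then x else a j))
    (hQstar_deg : ∀ (i : Fin n) (a : Fin n → F), (Qstar i a).degree ≤ d)
    (hQ_deg : ∀ (i : Fin n) (a : Fin n → F), (Q i a).degree ≤ d)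
    (hQ_prefix : ∀ (i : Fin n) (a a' : Fin n → F),
      (∀ j : Fin n, j < i → a j = a' j) → Q i a = Q i a')
    (hsum : (∑ s : Fin n → Bool, P (fun j => if s j then 1 else 0)) ≠ v) :
    (Nat.card {a : Fin n → F |
        (∀ i : Fin n, (Q i a).eval 0 + (Q i a).eval 1 =
          if h : 0 < (i : ℕ) then
            (Q ⟨(i : ℕ) - 1, by have := i.isLt; omega⟩ a).eval
              (a ⟨(i : ℕ) - 1, by have := i.isLt; omega⟩)
          else v) ∧
        (Q ⟨n - 1, by omega⟩ a).eval (a ⟨n - 1, by omega⟩) = P a} : ℚ)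
      / (Fintype.card F : ℚ) ^ n ≤ (n * d : ℚ) / (Fintype.card F : ℚ) := by
  classical
  -- Fact 1 : Q*_i evaluated at a i equals R_{i+1}
  have fact1 : ∀ (i : Fin n) (a : Fin n → F),
      (Qstar i a).eval (a i) = sumcheckR P ((i : ℕ) + 1) a := by
    intro i a
    rw [hQstar_eval]
    refine Fintype.sum_equiv
      (Equiv.arrowCongr (Equiv.subtypeEquivRight (fun j => Iff.rfl)) (Equiv.refl Bool)) _ _ ?_
    intro s
    congr 1
    funext j
    by_cases h : i < j
    · rw [dif_pos h, dif_pos (show (i : ℕ) + 1 ≤ (j : ℕ) from h)]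
      rfl
    · rw [dif_neg h, dif_neg (show ¬ ((i : ℕ) + 1 ≤ (j : ℕ)) from h)]
      by_cases h2 : j = i
      · rw [if_pos h2, h2]
      · rw [if_neg h2]
  -- Fact 2 : Q*_i(0) + Q*_i(1) = R_i
  have fact2 : ∀ (i : Fin n) (a : Fin n → F),
      (Qstar i a).eval 0 + (Qstar i a).eval 1 = sumcheckR P (i : ℕ) a := by
    intro i a
    rw [add_comm, hQstar_eval, hQstar_eval]
    unfold sumcheckR
    rw [Fintype.sum_equiv (sumcheckEquivSplit i) _
      (fun bt => P (fun j => if h : i < j then (if bt.2 ⟨j, h⟩ then 1 else 0)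
          else if j = i then (if bt.1 then (1 : F) else 0) else a j)) ?_]
    · rw [Fintype.sum_prod_type, Fintype.sum_bool]
      congr 1
    · intro s
      congr 1
      funext j
      by_cases h2 : i < j
      · rw [dif_pos (le_of_lt h2 : (i : ℕ) ≤ (j : ℕ)), dif_pos h2]
        rfl
      · by_cases h3 : j = i
        · subst h3
          rw [dif_pos le_rfl, dif_neg (lt_irrefl j), if_pos rfl]
          rfl
        · rw [dif_neg (fun h : (i : ℕ) ≤ (j : ℕ) => by
              simp only [Fin.lt_def, not_lt] at h2
              exact h3 (Fin.ext (le_antisymm h2 h))),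
            dif_neg h2, if_neg h3]
  -- Fact 3 : R_0 is the full boolean sum
  have fact3 : ∀ a : Fin n → F,
      sumcheckR P 0 a = ∑ s : Fin n → Bool, P (fun j => if s j then 1 else 0) := by
    intro a
    unfold sumcheckR
    refine Fintype.sum_equiv
      (Equiv.arrowCongr (Equiv.subtypeUnivEquiv (fun j => Nat.zero_le _)) (Equiv.refl Bool)) _ _ ?_
    intro s
    congr 1
  -- Fact 4 : R_n a = P a
  have fact4 : ∀ a : Fin n → F, sumcheckR P n a = P a := by
    intro a
    have he : IsEmpty {j : Fin n // (n : ℕ) ≤ (j : ℕ)} :=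
      ⟨fun j => absurd j.2 (by have := j.1.isLt; omega)⟩
    unfold sumcheckR
    rw [Finset.sum_congr rfl (fun s _ => by
      show P _ = P a
      congr 1
      funext j
      exact dif_neg (by have := j.isLt; omega))]
    rw [Finset.sum_const, Finset.card_univ]
    haveI := he
    haveI : Unique ({j : Fin n // (n : ℕ) ≤ (j : ℕ)} → Bool) := Pi.uniqueOfIsEmpty _
    rw [Fintype.card_unique, one_smul]
  set p := Fintype.card F with hpdef
  have hp0 : 0 < p := Fintype.card_pos
  -- the verifier-acceptance predicate
  set chk : (Fin n → F) → Prop := fun a =>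
      (∀ i : Fin n, (Q i a).eval 0 + (Q i a).eval 1 =
        if h : 0 < (i : ℕ) then
          (Q ⟨(i : ℕ) - 1, by have := i.isLt; omega⟩ a).eval
            (a ⟨(i : ℕ) - 1, by have := i.isLt; omega⟩)
        else v) ∧
      (Q ⟨n - 1, by omega⟩ a).eval (a ⟨n - 1, by omega⟩) = P a with hchkdef
  -- Main structural claim: an accepted transcript hits a bad event at some round
  have main : ∀ a : Fin n → F, chk a →
      ∃ i : Fin n, Q i a ≠ Qstar i a ∧
        (Q i a).eval (a i) = (Qstar i a).eval (a i) := by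
    intro a ha
    obtain ⟨hchk, hfin⟩ := ha
    by_contra hno
    push_neg at hno
    have key : ∀ k, ∀ hk : k < n,
        (Q ⟨k, hk⟩ a).eval (a ⟨k, hk⟩) ≠ (Qstar ⟨k, hk⟩ a).eval (a ⟨k, hk⟩) := by
      intro k
      induction k with
      | zero =>
        intro hk
        apply hno
        intro heq
        apply hsum
        have h1 := hchk ⟨0, hk⟩
        rw [dif_neg (by simp)] at h1
        calc (∑ s : Fin n → Bool, P fun j => if s j then 1 else 0)
            = sumcheckR P 0 a := (fact3 a).symm
          _ = (Qstar ⟨0, hk⟩ a).eval 0 + (Qstar ⟨0, hk⟩ a).eval 1 := (fact2 ⟨0, hk⟩ a).symm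
          _ = (Q ⟨0, hk⟩ a).eval 0 + (Q ⟨0, hk⟩ a).eval 1 := by rw [heq]
          _ = v := h1
      | succ k ih =>
        intro hk
        have hk' : k < n := by omega
        apply hno
        intro heq
        apply ih hk'
        have h1 := hchk ⟨k + 1, hk⟩
        rw [dif_pos (Nat.succ_pos k)] at h1
        calc (Q ⟨k, hk'⟩ a).eval (a ⟨k, hk'⟩)
            = (Q ⟨k + 1, hk⟩ a).eval 0 + (Q ⟨k + 1, hk⟩ a).eval 1 := h1.symm
          _ = (Qstar ⟨k + 1, hk⟩ a).eval 0 + (Qstar ⟨k + 1, hk⟩ a).eval 1 := by rw [heq]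
          _ = sumcheckR P (k + 1) a := fact2 ⟨k + 1, hk⟩ a
          _ = (Qstar ⟨k, hk'⟩ a).eval (a ⟨k, hk'⟩) := (fact1 ⟨k, hk'⟩ a).symm
    apply key (n - 1) (by omega)
    have hfact1 := fact1 ⟨n - 1, by omega⟩ a
    have hone : n - 1 + 1 = n := by omega
    rw [show ((⟨n - 1, by omega⟩ : Fin n) : ℕ) = n - 1 from rfl, hone] at hfact1
    rw [hfact1, fact4 a]
    exact hfin
  -- From here, the counting argument.  Key natural-number bound:
  have hNat : ∀ _h : d < p, (Finset.univ.filter chk).card ≤ n * (d * p ^ (n - 1)) := by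
    intro hd
    -- Qstar is also prefix-determined (needs d < p)
    have fact5 : ∀ (i : Fin n) (a a' : Fin n → F),
        (∀ j : Fin n, j < i → a j = a' j) → Qstar i a = Qstar i a' := by
      intro i a a' hag
      have hz : Qstar i a - Qstar i a' = 0 := by
        apply Polynomial.eq_zero_of_natDegree_lt_card_of_eval_eq_zero _
          (Function.injective_id (α := F))
        · intro x
          rw [Polynomial.eval_sub, sub_eq_zero, hQstar_eval, hQstar_eval]
          apply Finset.sum_congr rfl
          intro s _
          congr 1
          funext j
          by_cases h : i < j
          · rw [dif_pos h, dif_pos h]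
          · rw [dif_neg h, dif_neg h]
            by_cases h2 : j = i
            · rw [if_pos h2, if_pos h2]
            · rw [if_neg h2, if_neg h2]
              exact hag j (lt_of_le_of_ne (not_lt.1 h) h2)
        · calc (Qstar i a - Qstar i a').natDegree
              ≤ d := Polynomial.natDegree_le_iff_degree_le.2
                (le_trans (Polynomial.degree_sub_le _ _)
                  (max_le (hQstar_deg i a) (hQstar_deg i a')))
            _ < Fintype.card F := hd
      exact sub_eq_zero.1 hz
    -- bad-event sets
    have hE : ∀ i : Fin n, (Finset.univ.filter (fun a : Fin n → F =>
        Q i a ≠ Qstar i a ∧ (Q i a).eval (a i) = (Qstar i a).eval (a i))).card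
          ≤ d * p ^ (n - 1) := by
      intro i
      set f : (Fin n → F) → ({j : Fin n // j ≠ i} → F) := fun a j => a j.1 with hfdef
      set t := Finset.univ.filter (fun a : Fin n → F =>
        Q i a ≠ Qstar i a ∧ (Q i a).eval (a i) = (Qstar i a).eval (a i)) with htdef
      have hfib : ∀ b ∈ t.image f, (t.filter (fun a => f a = b)).card ≤ d := by
        intro b hb
        obtain ⟨a0, ha0t, ha0b⟩ := Finset.mem_image.1 hb
        obtain ⟨-, ha0ne, ha0ev⟩ :
            a0 ∈ Finset.univ ∧ Q i a0 ≠ Qstar i a0 ∧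
              (Q i a0).eval (a0 i) = (Qstar i a0).eval (a0 i) := by
          simpa [htdef] using Finset.mem_filter.1 ha0t
        set g := Q i a0 - Qstar i a0 with hgdef
        have hg0 : g ≠ 0 := sub_ne_zero.2 ha0ne
        have hgd : g.natDegree ≤ d := Polynomial.natDegree_le_iff_degree_le.2
          (le_trans (Polynomial.degree_sub_le _ _)
            (max_le (hQ_deg i a0) (hQstar_deg i a0)))
        calc (t.filter (fun a => f a = b)).card
            ≤ g.roots.toFinset.card := by
              apply Finset.card_le_card_of_injOn (fun a => a i)
              · intro a ha
                obtain ⟨hat, hab⟩ := Finset.mem_filter.1 ha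
                obtain ⟨-, hane, haev⟩ :
                    a ∈ Finset.univ ∧ Q i a ≠ Qstar i a ∧
                      (Q i a).eval (a i) = (Qstar i a).eval (a i) := by
                  simpa [htdef] using Finset.mem_filter.1 hat
                have hagree : ∀ j : Fin n, j ≠ i → a j = a0 j := fun j hj =>
                  congrFun (hab.trans ha0b.symm) ⟨j, hj⟩
                have hQeq : Q i a = Q i a0 :=
                  hQ_prefix i a a0 (fun j hj => hagree j (ne_of_lt hj))
                have hQseq : Qstar i a = Qstar i a0 :=
                  fact5 i a a0 (fun j hj => hagree j (ne_of_lt hj))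
                rw [Finset.mem_coe, Multiset.mem_toFinset, Polynomial.mem_roots hg0]
                show g.eval (a i) = 0
                rw [hgdef, Polynomial.eval_sub, ← hQeq, ← hQseq, haev, sub_self]
              · intro x hx y hy hxy
                obtain ⟨-, hxb⟩ := Finset.mem_filter.1 hx
                obtain ⟨-, hyb⟩ := Finset.mem_filter.1 hy
                funext j
                by_cases hj : j = i
                · subst hj; exact hxy
                · exact congrFun (hxb.trans hyb.symm) ⟨j, hj⟩
          _ ≤ g.roots.card := Multiset.toFinset_card_le _
          _ ≤ g.natDegree := Polynomial.card_roots' g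
          _ ≤ d := hgd
      calc t.card ≤ d * (t.image f).card := Finset.card_le_mul_card_image t d hfib
        _ ≤ d * p ^ (n - 1) := by
            apply Nat.mul_le_mul_left
            calc (t.image f).card ≤ Fintype.card ({j : Fin n // j ≠ i} → F) := by
                  rw [← Finset.card_univ]
                  exact Finset.card_le_card (Finset.subset_univ _)
              _ = p ^ (n - 1) := by
                  rw [Fintype.card_fun]
                  congr 1
                  have : Fintype.card {j : Fin n // j ≠ i} =
                      Fintype.card (Fin n) - Fintype.card {j : Fin n // j = i} :=
                    Fintype.card_subtype_compl _
                  rw [this, Fintype.card_subtype_eq, Fintype.card_fin]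
    -- the acceptance set is inside the union of the bad events
    have hsub : Finset.univ.filter chk ⊆
        Finset.univ.biUnion (fun i : Fin n => Finset.univ.filter (fun a : Fin n → F =>
          Q i a ≠ Qstar i a ∧ (Q i a).eval (a i) = (Qstar i a).eval (a i))) := by
      intro a ha
      obtain ⟨i, hi1, hi2⟩ := main a ((Finset.mem_filter.1 ha).2)
      exact Finset.mem_biUnion.2 ⟨i, Finset.mem_univ i,
        Finset.mem_filter.2 ⟨Finset.mem_univ a, hi1, hi2⟩⟩
    calc (Finset.univ.filter chk).card
        ≤ _ := Finset.card_le_card hsub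
      _ ≤ ∑ i : Fin n, (Finset.univ.filter (fun a : Fin n → F =>
            Q i a ≠ Qstar i a ∧ (Q i a).eval (a i) = (Qstar i a).eval (a i))).card :=
          Finset.card_biUnion_le
      _ ≤ ∑ _i : Fin n, d * p ^ (n - 1) := Finset.sum_le_sum (fun i _ => hE i)
      _ = n * (d * p ^ (n - 1)) := by rw [Finset.sum_const, Finset.card_univ,
            Fintype.card_fin, smul_eq_mul]
  have hkey : Nat.card (setOf chk) ≤ n * (d * p ^ (n - 1)) := by
    have h1 : Nat.card (setOf chk) = (Finset.univ.filter chk).card := by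
      rw [Nat.card_eq_fintype_card, Fintype.card_subtype]
      exact congrArg Finset.card (Finset.filter_congr (fun x _ => Iff.rfl))
    by_cases hd : d < p
    · rw [h1]; exact hNat hd
    · push_neg at hd
      rw [h1]
      calc (Finset.univ.filter chk).card
          ≤ Finset.univ.card := Finset.card_le_card (Finset.filter_subset _ _)
        _ = p ^ n := by rw [Finset.card_univ, Fintype.card_fun, Fintype.card_fin]
        _ = p ^ (n - 1) * p := by rw [← pow_succ]; congr 1; omega
        _ ≤ p ^ (n - 1) * d := Nat.mul_le_mul_left _ hd
        _ = 1 * (d * p ^ (n - 1)) := by ring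
        _ ≤ n * (d * p ^ (n - 1)) := Nat.mul_le_mul_right _ hn
  have hpQ : (0 : ℚ) < (p : ℚ) := by exact_mod_cast hp0
  rw [div_le_div_iff₀ (pow_pos hpQ n) hpQ]
  calc (Nat.card (setOf chk) : ℚ) * (p : ℚ)
      ≤ ((n * (d * p ^ (n - 1)) : ℕ) : ℚ) * (p : ℚ) :=
        mul_le_mul_of_nonneg_right (Nat.cast_le.2 hkey) (le_of_lt hpQ)
    _ = (n : ℚ) * (d : ℚ) * ((p : ℚ) ^ (n - 1) * (p : ℚ)) := by push_cast; ring
    _ = (n : ℚ) * (d : ℚ) * (p : ℚ) ^ n := by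
        rw [← pow_succ, show n - 1 + 1 = n from by omega]
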